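/- Suppose i < n satisfies max(DX i) ≥ α and min(DX i) < α. Then: (1) every value v ∈ DX i with v > α is inconsistent; (2) every value v ∈ DX i with v < α is consistent; (3) if moreover α ∈ DX i, then α is inconsistent if and only if cx(α) + 1 = cy(α), γ holds, and either (min(DX i) = β and cx(β) > cy(β) + 1), or (min(DX i) = β and cx(β) = cy(β) + 1 and σ holds), or min(DX i) < β. -/

import Mathlib

namespace MsetPaper

/-- The maximum element of a multiset of naturals (`0` for the empty multiset). -/
def mmax (s : Multiset ℕ) : ℕ := s.sup

/-- The strict multiset order `x <ₘ y` of the paper: either `x` is empty and `y` is not,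
or both are nonempty and either `max x < max y`, or the maxima agree and the multisets
with one occurrence of the maximum removed are again strictly ordered. -/
inductive MLt : Multiset ℕ → Multiset ℕ → Prop
  | empty {y : Multiset ℕ} : y ≠ 0 → MLt 0 y
  | maxLt {x y : Multiset ℕ} : x ≠ 0 → y ≠ 0 → mmax x < mmax y → MLt x y
  | maxEq {x y : Multiset ℕ} : x ≠ 0 → y ≠ 0 → mmax x = mmax y →
      MLt (x.erase (mmax x)) (y.erase (mmax y)) → MLt x y

/-- The (non-strict) multiset order `x ≤ₘ y`. -/
def MLe (x y : Multiset ℕ) : Prop := MLt x y ∨ x = y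

/-- The multiset of values taken by a vector. -/
def msetOf {n : ℕ} (x : Fin n → ℕ) : Multiset ℕ := (List.ofFn x : List ℕ)

/-- `(x, y)` is a satisfying assignment for the constraint `X ≤ₘ Y`. -/
def SatLe {n : ℕ} (DX DY : Fin n → Finset ℕ) (x y : Fin n → ℕ) : Prop :=
  (∀ i, x i ∈ DX i) ∧ (∀ i, y i ∈ DY i) ∧ MLe (msetOf x) (msetOf y)

/-- The value `v` is consistent for the variable `X i`. -/
def ConsX {n : ℕ} (DX DY : Fin n → Finset ℕ) (i : Fin n) (v : ℕ) : Prop :=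
  ∃ x y, SatLe DX DY x y ∧ x i = v

/-- The value `v` is consistent for the variable `Y i`. -/
def ConsY {n : ℕ} (DX DY : Fin n → Finset ℕ) (i : Fin n) (v : ℕ) : Prop :=
  ∃ x y, SatLe DX DY x y ∧ y i = v

/-- The constraint `X ≤ₘ Y` is generalised arc-consistent. -/
def GACLe {n : ℕ} (DX DY : Fin n → Finset ℕ) : Prop :=
  (∀ i, ∀ v ∈ DX i, ConsX DX DY i v) ∧ (∀ i, ∀ v ∈ DY i, ConsY DX DY i v)

/-- `cx DX hDX v` counts the indices `i` with `min (DX i) = v`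
(the occurrence vector of `floor(X)`). -/
def cx {n : ℕ} (DX : Fin n → Finset ℕ) (hDX : ∀ i, (DX i).Nonempty) (v : ℕ) : ℕ :=
  (Finset.univ.filter fun i => (DX i).min' (hDX i) = v).card

/-- `cy DY hDY v` counts the indices `i` with `max (DY i) = v`
(the occurrence vector of `ceiling(Y)`). -/
def cy {n : ℕ} (DY : Fin n → Finset ℕ) (hDY : ∀ i, (DY i).Nonempty) (v : ℕ) : ℕ :=
  (Finset.univ.filter fun i => (DY i).max' (hDY i) = v).card

open Finset

lemma mmax_mem {s : Multiset ℕ} (h : s ≠ 0) : mmax s ∈ s := by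
  induction s using Multiset.induction with
  | empty => exact absurd rfl h
  | cons a t ih =>
    rw [mmax, Multiset.sup_cons]
    rcases eq_or_ne t 0 with rfl | ht
    · simp [mmax]
    · rcases le_total a t.sup with h1 | h1
      · rw [sup_eq_right.mpr h1]; exact Multiset.mem_cons_of_mem (ih ht)
      · rw [sup_eq_left.mpr h1]; exact Multiset.mem_cons_self a t

lemma le_mmax {s : Multiset ℕ} {a : ℕ} (h : a ∈ s) : a ≤ mmax s :=
  Multiset.le_sup h

lemma count_eq_zero_of_mmax_lt {s : Multiset ℕ} {w : ℕ} (h : mmax s < w) : s.count w = 0 := by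
  rw [Multiset.count_eq_zero]
  exact fun hw => absurd (le_mmax hw) (not_le.mpr h)

lemma count_pos_max {s : Multiset ℕ} (h : s ≠ 0) : 0 < s.count (mmax s) :=
  Multiset.count_pos.mpr (mmax_mem h)

lemma mlt_counts {s t : Multiset ℕ} (h : MLt s t) :
    ∃ v, s.count v < t.count v ∧ ∀ w, v < w → s.count w = t.count w := by
  induction h with
  | @empty y hy =>
    exact ⟨mmax y, by simpa using count_pos_max hy,
      fun w hw => by rw [Multiset.count_zero, count_eq_zero_of_mmax_lt hw]⟩
  | @maxLt x y hx hy hlt =>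
    refine ⟨mmax y, ?_, fun w hw => ?_⟩
    · rw [count_eq_zero_of_mmax_lt hlt]; exact count_pos_max hy
    · rw [count_eq_zero_of_mmax_lt (hlt.trans hw), count_eq_zero_of_mmax_lt hw]
  | @maxEq x y hx hy heq _ ih =>
    obtain ⟨v, h1, h2⟩ := ih
    rw [show y.erase (mmax y) = y.erase (mmax x) from by rw [heq]] at h1 h2
    have hxM : 0 < x.count (mmax x) := count_pos_max hx
    have hyM : 0 < y.count (mmax x) := by rw [heq]; exact count_pos_max hy
    rcases lt_trichotomy v (mmax x) with hv | rfl | hv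
    · refine ⟨v, ?_, fun w hw => ?_⟩
      · rwa [Multiset.count_erase_of_ne hv.ne, Multiset.count_erase_of_ne hv.ne] at h1
      · rcases eq_or_ne w (mmax x) with rfl | hwM
        · have := h2 _ hw
          rw [Multiset.count_erase_self, Multiset.count_erase_self] at this
          omega
        · have := h2 w hw
          rwa [Multiset.count_erase_of_ne hwM, Multiset.count_erase_of_ne hwM] at this
    · refine ⟨mmax x, ?_, fun w hw => ?_⟩
      · rw [Multiset.count_erase_self, Multiset.count_erase_self] at h1
        omega
      · rw [count_eq_zero_of_mmax_lt hw, count_eq_zero_of_mmax_lt (heq ▸ hw)]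
    · exfalso
      have hy0 : y.count v = 0 := count_eq_zero_of_mmax_lt (heq ▸ hv)
      rw [Multiset.count_erase_of_ne hv.ne', Multiset.count_erase_of_ne hv.ne', hy0] at h1
      omega

lemma counts_mlt : ∀ (s t : Multiset ℕ),
    (∃ v, s.count v < t.count v ∧ ∀ w, v < w → s.count w = t.count w) → MLt s t := by
  intro s
  induction s using Multiset.strongInductionOn with
  | _ s IH =>
    rintro t ⟨v, h1, h2⟩
    have hvt : v ∈ t := Multiset.count_pos.mp (by omega)
    have ht : t ≠ 0 := fun h => by simp [h] at hvt
    rcases eq_or_ne s 0 with rfl | hs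
    · exact MLt.empty ht
    rcases lt_trichotomy (mmax s) (mmax t) with hlt | heq | hgt
    · exact MLt.maxLt hs ht hlt
    · refine MLt.maxEq hs ht heq ?_
      rw [show t.erase (mmax t) = t.erase (mmax s) from by rw [heq]]
      apply IH _ (Multiset.erase_lt.mpr (mmax_mem hs))
      have hxM : 0 < s.count (mmax s) := count_pos_max hs
      have hyM : 0 < t.count (mmax s) := by rw [heq]; exact count_pos_max ht
      rcases lt_trichotomy v (mmax s) with hv | rfl | hv
      · refine ⟨v, ?_, fun w hw => ?_⟩
        · rwa [Multiset.count_erase_of_ne hv.ne, Multiset.count_erase_of_ne hv.ne]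
        · rcases eq_or_ne w (mmax s) with rfl | hwM
          · rw [Multiset.count_erase_self, Multiset.count_erase_self, h2 _ hw]
          · rw [Multiset.count_erase_of_ne hwM, Multiset.count_erase_of_ne hwM, h2 _ hw]
      · refine ⟨mmax s, ?_, fun w hw => ?_⟩
        · rw [Multiset.count_erase_self, Multiset.count_erase_self]; omega
        · rw [Multiset.count_erase_of_ne hw.ne', Multiset.count_erase_of_ne hw.ne', h2 _ hw]
      · exfalso
        have : t.count v = 0 := count_eq_zero_of_mmax_lt (heq ▸ hv)
        omega
    · exfalso
      rcases le_or_gt (mmax s) v with hMv | hvM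
      · have : t.count v = 0 := count_eq_zero_of_mmax_lt (lt_of_lt_of_le hgt hMv)
        omega
      · have h0 : t.count (mmax s) = 0 := count_eq_zero_of_mmax_lt hgt
        have := h2 _ hvM
        have := count_pos_max hs
        omega

lemma exists_greatest_diff {s t : Multiset ℕ} (h : ¬ ∀ w, s.count w = t.count w) :
    ∃ v, s.count v ≠ t.count v ∧ ∀ w, v < w → s.count w = t.count w := by
  push_neg at h
  obtain ⟨w0, hw0⟩ := h
  set N := mmax s ⊔ mmax t with hN
  have hb : ∀ w, N < w → s.count w = t.count w := fun w hw => by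
    rw [count_eq_zero_of_mmax_lt (lt_of_le_of_lt le_sup_left hw),
      count_eq_zero_of_mmax_lt (lt_of_le_of_lt le_sup_right hw)]
  have hw0N : w0 ≤ N := by
    by_contra hc
    exact hw0 (hb _ (lt_of_not_ge hc))
  refine ⟨Nat.findGreatest (fun w => s.count w ≠ t.count w) N,
    Nat.findGreatest_spec (P := fun w => s.count w ≠ t.count w) hw0N hw0, fun w hw => ?_⟩
  rcases le_or_gt w N with hwN | hwN
  · by_contra hne
    exact Nat.findGreatest_is_greatest (P := fun w => s.count w ≠ t.count w) hw hwN hne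
  · exact hb w hwN

lemma not_mle_iff (s t : Multiset ℕ) :
    ¬ MLe s t ↔ ∃ v, t.count v < s.count v ∧ ∀ w, v < w → s.count w = t.count w := by
  constructor
  · intro h
    have hne : ¬ ∀ w, s.count w = t.count w := fun heq =>
      h (Or.inr (Multiset.ext.mpr heq))
    obtain ⟨v, hv, hvsup⟩ := exists_greatest_diff hne
    refine ⟨v, ?_, hvsup⟩
    rcases lt_trichotomy (s.count v) (t.count v) with hlt | he | hgt
    · exact absurd (Or.inl (counts_mlt s t ⟨v, hlt, hvsup⟩)) h
    · exact absurd he hv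
    · exact hgt
  · rintro ⟨v, h1, h2⟩ (hlt | rfl)
    · obtain ⟨v', h1', h2'⟩ := mlt_counts hlt
      rcases lt_trichotomy v v' with h | rfl | h
      · have := h2 v' h; omega
      · omega
      · have := h2' v h; omega
    · omega

lemma mle_trans {s t u : Multiset ℕ} (h1 : MLe s t) (h2 : MLe t u) : MLe s u := by
  rcases h1 with h1 | rfl
  · rcases h2 with h2 | rfl
    · obtain ⟨v1, a1, b1⟩ := mlt_counts h1
      obtain ⟨v2, a2, b2⟩ := mlt_counts h2
      left
      apply counts_mlt
      rcases lt_trichotomy v1 v2 with h | rfl | h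
      · exact ⟨v2, by rw [b1 v2 h]; exact a2, fun w hw => (b1 w (h.trans hw)).trans (b2 w hw)⟩
      · exact ⟨v1, a1.trans a2, fun w hw => (b1 w hw).trans (b2 w hw)⟩
      · exact ⟨v1, by rw [← b2 v1 h]; exact a1, fun w hw => (b1 w hw).trans (b2 w (h.trans hw))⟩
    · exact Or.inl h1
  · exact h2


lemma count_msetOf {n : ℕ} (x : Fin n → ℕ) (w : ℕ) :
    (msetOf x).count w = (Finset.univ.filter fun j => x j = w).card := by
  have h : (msetOf x) = Multiset.map x Finset.univ.val := by
    simp [msetOf, Finset.univ, Fintype.elems, List.ofFn_eq_map]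
  rw [h, Multiset.count_map, Finset.card, Finset.filter_val]
  congr 1
  ext j
  simp [eq_comm]

lemma card_filter_eq_ite_add {n : ℕ} (p : Fin n → Prop) [DecidablePred p] (i : Fin n) :
    (Finset.univ.filter p).card
      = (if p i then 1 else 0) + (Finset.univ.filter fun j => j ≠ i ∧ p j).card := by
  have hsplit : Finset.univ.filter p
      = (Finset.univ.filter fun j => j = i ∧ p j) ∪ (Finset.univ.filter fun j => j ≠ i ∧ p j) := by
    rw [← Finset.filter_or]
    apply Finset.filter_congr
    intro j _
    by_cases hj : j = i <;> simp [hj]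
  rw [hsplit, Finset.card_union_of_disjoint]
  · congr 1
    by_cases hpi : p i
    · rw [if_pos hpi]
      have : (Finset.univ.filter fun j => j = i ∧ p j) = {i} := by
        ext j
        simp only [Finset.mem_filter, Finset.mem_univ, true_and, Finset.mem_singleton]
        constructor
        · exact fun h => h.1
        · rintro rfl; exact ⟨rfl, hpi⟩
      rw [this, Finset.card_singleton]
    · rw [if_neg hpi]
      have : (Finset.univ.filter fun j => j = i ∧ p j) = ∅ := by
        ext j
        simp only [Finset.mem_filter, Finset.mem_univ, true_and, Finset.notMem_empty,
          iff_false, not_and]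
        rintro rfl; exact hpi
      rw [this, Finset.card_empty]
  · rw [Finset.disjoint_left]
    intro j hj1 hj2
    simp only [Finset.mem_filter] at hj1 hj2
    exact hj2.2.1 hj1.2.1

lemma cumul_split {n : ℕ} (z : Fin n → ℕ) (w : ℕ) :
    (Finset.univ.filter fun j => w ≤ z j).card
      = (Finset.univ.filter fun j => z j = w).card
        + (Finset.univ.filter fun j => w + 1 ≤ z j).card := by
  rw [← Finset.card_union_of_disjoint, ← Finset.filter_or]
  · congr 1
    apply Finset.filter_congr
    intro j _
    constructor
    · intro h; omega
    · intro h; omega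
  · rw [Finset.disjoint_left]
    intro j hj1 hj2
    simp only [Finset.mem_filter] at hj1 hj2
    omega

lemma cumul_eq_sum {n : ℕ} (z : Fin n → ℕ) (N w : ℕ) (hz : ∀ j, z j ≤ N) :
    (Finset.univ.filter fun j => w + 1 ≤ z j).card
      = ∑ u ∈ Finset.Ico (w + 1) (N + 1), (Finset.univ.filter fun j => z j = u).card := by
  rw [Finset.card_eq_sum_card_fiberwise
    (f := z) (t := Finset.Ico (w + 1) (N + 1))
    (fun j hj => by simp only [Finset.mem_coe, Finset.mem_filter] at hj
                    exact Finset.mem_Ico.mpr ⟨hj.2, Nat.lt_succ_of_le (hz j)⟩)]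
  apply Finset.sum_congr rfl
  intro u hu
  congr 1
  ext j
  simp only [Finset.mem_filter, Finset.mem_univ, true_and]
  rw [Finset.mem_Ico] at hu
  constructor
  · exact fun h => h.2
  · intro h; exact ⟨by omega, h⟩

lemma mle_msetOf_mono {n : ℕ} {x x' : Fin n → ℕ} (h : ∀ j, x j ≤ x' j) :
    MLe (msetOf x) (msetOf x') := by
  by_cases heq : ∀ w, (msetOf x).count w = (msetOf x').count w
  · exact Or.inr (Multiset.ext.mpr heq)
  obtain ⟨v, hv, hsup⟩ := exists_greatest_diff heq
  left
  apply counts_mlt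
  refine ⟨v, lt_of_le_of_ne ?_ hv, hsup⟩
  simp only [count_msetOf] at hv hsup ⊢
  set N := Finset.univ.sup x' with hN
  have hxN : ∀ j, x j ≤ N := fun j => (h j).trans (Finset.le_sup (Finset.mem_univ j))
  have hx'N : ∀ j, x' j ≤ N := fun j => Finset.le_sup (Finset.mem_univ j)
  have htail : (Finset.univ.filter fun j => v + 1 ≤ x j).card
      = (Finset.univ.filter fun j => v + 1 ≤ x' j).card := by
    rw [cumul_eq_sum x N v hxN, cumul_eq_sum x' N v hx'N]
    apply Finset.sum_congr rfl
    intro u hu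
    rw [Finset.mem_Ico] at hu
    exact hsup u (by omega)
  have hmono : (Finset.univ.filter fun j => v ≤ x j).card
      ≤ (Finset.univ.filter fun j => v ≤ x' j).card := by
    apply Finset.card_le_card
    intro j hj
    simp only [Finset.mem_filter] at hj ⊢
    exact ⟨hj.1, hj.2.trans (h j)⟩
  have e1 := cumul_split x v
  have e2 := cumul_split x' v
  omega


/-- Theorem 5 of the paper (values of `X i` when `max(DX i) ≥ α > min(DX i)`). -/
theorem stmt11 (n : ℕ) (hn : 1 ≤ n) (DX DY : Fin n → Finset ℕ)
    (hDX : ∀ i, (DX i).Nonempty) (hDY : ∀ i, (DY i).Nonempty)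
    (α : ℕ)
    (hα1 : cx DX hDX α < cy DY hDY α)
    (hα2 : ∀ b : ℕ, α < b → cx DX hDX b = cy DY hDY b)
    (β : ℕ) (hβα : β < α)
    (hβ1 : cy DY hDY β < cx DX hDX β)
    (hβ2 : ∀ v : ℕ, β < v → v < α → cx DX hDX v ≤ cy DY hDY v)
    (γ : Prop) (hγ : γ ↔ (β = α - 1 ∨ ∀ v : ℕ, β < v → v < α → cx DX hDX v = cy DY hDY v))
    (σ : Prop) (hσ : σ ↔ ∃ a : ℕ, a < β ∧ cy DY hDY a < cx DX hDX a ∧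
      ∀ w : ℕ, a < w → w < β → cx DX hDX w = cy DY hDY w)
    (i : Fin n) (hmax : α ≤ (DX i).max' (hDX i)) (hmin : (DX i).min' (hDX i) < α) :
    (∀ v ∈ DX i, α < v → ¬ ConsX DX DY i v) ∧
    (∀ v ∈ DX i, v < α → ConsX DX DY i v) ∧
    (α ∈ DX i →
      (¬ ConsX DX DY i α ↔
        cx DX hDX α + 1 = cy DY hDY α ∧ γ ∧
          (((DX i).min' (hDX i) = β ∧ cy DY hDY β + 1 < cx DX hDX β) ∨
           ((DX i).min' (hDX i) = β ∧ cx DX hDX β = cy DY hDY β + 1 ∧ σ) ∨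
           (DX i).min' (hDX i) < β))) := by
  classical
  set m : ℕ := (DX i).min' (hDX i) with hmdef
  -- counts of the "ceiling" assignment for Y
  have hcy : ∀ w, (msetOf fun j => (DY j).max' (hDY j)).count w = cy DY hDY w := by
    intro w
    rw [count_msetOf]
    rfl
  -- counts of the assignment (x i = v, x j = min elsewhere)
  have hxv : ∀ v w,
      (msetOf fun j => if j = i then v else (DX j).min' (hDX j)).count w
        + (if m = w then 1 else 0)
      = cx DX hDX w + (if v = w then 1 else 0) := by
    intro v w
    rw [count_msetOf,
      card_filter_eq_ite_add (fun j => (if j = i then v else (DX j).min' (hDX j)) = w) i,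
      show cx DX hDX w = (Finset.univ.filter fun j => (DX j).min' (hDX j) = w).card from rfl,
      card_filter_eq_ite_add (fun j => (DX j).min' (hDX j) = w) i]
    have hfe : (Finset.univ.filter fun j => j ≠ i ∧ (if j = i then v else (DX j).min' (hDX j)) = w)
        = (Finset.univ.filter fun j => j ≠ i ∧ (DX j).min' (hDX j) = w) := by
      apply Finset.filter_congr
      intro j _
      by_cases hj : j = i <;> simp [hj]
    rw [hfe]
    simp only [eq_self_iff_true, if_true]
    rw [← hmdef]
    omega
  -- any consistent value is realized by the canonical assignment
  have key : ∀ v, ConsX DX DY i v →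
      MLe (msetOf fun j => if j = i then v else (DX j).min' (hDX j))
        (msetOf fun j => (DY j).max' (hDY j)) := by
    rintro v ⟨x, y, ⟨hxD, hyD, hxy⟩, hxi⟩
    have h1 : MLe (msetOf fun j => if j = i then v else (DX j).min' (hDX j)) (msetOf x) := by
      apply mle_msetOf_mono
      intro j
      by_cases hj : j = i
      · subst hj; rw [if_pos rfl, ← hxi]
      · rw [if_neg hj]; exact Finset.min'_le _ _ (hxD j)
    have h2 : MLe (msetOf y) (msetOf fun j => (DY j).max' (hDY j)) :=
      mle_msetOf_mono fun j => Finset.le_max' _ _ (hyD j)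
    exact mle_trans h1 (mle_trans hxy h2)
  have sat : ∀ v, v ∈ DX i →
      MLe (msetOf fun j => if j = i then v else (DX j).min' (hDX j))
        (msetOf fun j => (DY j).max' (hDY j)) → ConsX DX DY i v := by
    intro v hv hle
    refine ⟨_, _, ⟨fun j => ?_, fun j => Finset.max'_mem _ _, hle⟩, if_pos rfl⟩
    by_cases hj : j = i
    · subst hj; rw [if_pos rfl]; exact hv
    · rw [if_neg hj]; exact Finset.min'_mem _ _
  have hmi : m < α := hmin
  refine ⟨?_, ?_, ?_⟩
  · -- part 1 : values above α are inconsistent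
    intro v hv hαv hcons
    have hle := key v hcons
    refine (not_mle_iff _ _).mpr ⟨v, ?_, ?_⟩ hle
    · have h1 := hxv v v
      rw [if_neg (by omega : m ≠ v), if_pos rfl] at h1
      rw [hcy]
      have h2 := hα2 v hαv
      omega
    · intro w hw
      have h1 := hxv v w
      rw [if_neg (by omega : m ≠ w), if_neg (by omega : v ≠ w)] at h1
      rw [hcy]
      have h2 := hα2 w (hαv.trans hw)
      omega
  · -- part 2 : values below α are consistent
    intro v hv hvα
    apply sat v hv
    left
    apply counts_mlt
    refine ⟨α, ?_, fun w hw => ?_⟩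
    · have h1 := hxv v α
      rw [if_neg (by omega : m ≠ α), if_neg (by omega : v ≠ α)] at h1
      rw [hcy]
      omega
    · have h1 := hxv v w
      rw [if_neg (by omega : m ≠ w), if_neg (by omega : v ≠ w)] at h1
      rw [hcy]
      have h2 := hα2 w hw
      omega
  · -- part 3 : the value α
    intro hαD
    have hiff : ConsX DX DY i α ↔
        MLe (msetOf fun j => if j = i then α else (DX j).min' (hDX j))
          (msetOf fun j => (DY j).max' (hDY j)) := ⟨key α, sat α hαD⟩
    rw [hiff, not_mle_iff]
    have hd := hxv α
    have hdα : (msetOf fun j => if j = i then α else (DX j).min' (hDX j)).count α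
        = cx DX hDX α + 1 := by
      have h1 := hd α
      rw [if_neg (by omega : m ≠ α), if_pos rfl] at h1
      omega
    have hdgt : ∀ w, α < w →
        (msetOf fun j => if j = i then α else (DX j).min' (hDX j)).count w = cy DY hDY w := by
      intro w hw
      have h1 := hd w
      rw [if_neg (by omega : m ≠ w), if_neg (by omega : α ≠ w)] at h1
      have h2 := hα2 w hw
      omega
    have hdlt : ∀ w, w < α →
        (msetOf fun j => if j = i then α else (DX j).min' (hDX j)).count w
          + (if m = w then 1 else 0) = cx DX hDX w := by
      intro w hw
      have h1 := hd w
      rw [if_neg (by omega : α ≠ w)] at h1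
      omega
    constructor
    · rintro ⟨v, hv1, hv2⟩
      rw [hcy] at hv1
      have hvα : v < α := by
        rcases lt_trichotomy v α with h | rfl | h
        · exact h
        · exfalso; rw [hdα] at hv1; omega
        · exfalso; rw [hdgt v h] at hv1; omega
      have hcxα : cx DX hDX α + 1 = cy DY hDY α := by
        have h2 := hv2 α hvα
        rw [hcy, hdα] at h2
        omega
      have hvβ : v ≤ β := by
        by_contra hc
        have h3 := hdlt v hvα
        have h4 := hβ2 v (by omega) hvα
        by_cases hmv : m = v <;> simp only [hmv, if_pos, if_neg, ite_true, ite_false] at h3 <;> omega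
      have hE : ∀ w, β < w → w < α → cx DX hDX w = cy DY hDY w := by
        intro w hw1 hw2
        have h2 := hv2 w (by omega)
        rw [hcy] at h2
        have h3 := hdlt w hw2
        have h4 := hβ2 w hw1 hw2
        by_cases hmw : m = w <;> simp only [hmw, ite_true, ite_false, if_pos, if_neg] at h3 <;> omega
      refine ⟨hcxα, hγ.mpr (Or.inr hE), ?_⟩
      rcases eq_or_lt_of_le hvβ with rfl | hvltβ
      · -- v = β
        have h3 := hdlt v hβα
        by_cases hmβ : m = v
        · left
          refine ⟨hmβ, ?_⟩
          rw [if_pos hmβ] at h3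
          omega
        · right; right
          rcases lt_trichotomy m v with h | h | h
          · exact h
          · exact absurd h hmβ
          · exfalso
            have h5 := hE m h hmi
            have h6 := hv2 m h
            rw [hcy] at h6
            have h7 := hdlt m hmi
            rw [if_pos rfl] at h7
            omega
      · -- v < β
        have h2 := hv2 β hvltβ
        rw [hcy] at h2
        have h3 := hdlt β hβα
        have hmβ : m = β := by
          by_contra hc
          rw [if_neg hc] at h3
          omega
        rw [if_pos hmβ] at h3
        right; left
        refine ⟨hmβ, by omega, hσ.mpr ⟨v, hvltβ, ?_, ?_⟩⟩
        · have h4 := hdlt v hvα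
          rw [if_neg (by omega : m ≠ v)] at h4
          omega
        · intro w hw1 hw2
          have h5 := hv2 w hw1
          rw [hcy] at h5
          have h6 := hdlt w (by omega)
          rw [if_neg (by omega : m ≠ w)] at h6
          omega
    · rintro ⟨hcxα, hγ2, hdisj⟩
      have hE : ∀ w, β < w → w < α → cx DX hDX w = cy DY hDY w := by
        rcases hγ.mp hγ2 with hb | hb
        · intro w hw1 hw2; omega
        · exact hb
      have habove : ∀ w, β < w →
          (msetOf fun j => if j = i then α else (DX j).min' (hDX j)).count w
            = (msetOf fun j => (DY j).max' (hDY j)).count w := by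
        intro w hw
        rcases lt_trichotomy w α with h | rfl | h
        · have h1 := hdlt w h
          have h2 := hE w hw h
          rw [hcy]
          by_cases hmw : m = w
          · exfalso; omega
          · rw [if_neg hmw] at h1; omega
        · rw [hdα, hcy]; omega
        · rw [hdgt w h, hcy]
      rcases hdisj with ⟨hmβ, hgt⟩ | ⟨hmβ, heq1, hs⟩ | hlt
      · refine ⟨β, ?_, fun w hw => habove w hw⟩
        have h3 := hdlt β hβα
        rw [if_pos hmβ] at h3
        rw [hcy]
        omega
      · obtain ⟨a, haβ, hacx, haE⟩ := hσ.mp hs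
        refine ⟨a, ?_, fun w hw => ?_⟩
        · have h3 := hdlt a (by omega)
          rw [if_neg (by omega : m ≠ a)] at h3
          rw [hcy]
          omega
        · rcases lt_trichotomy w β with h | rfl | h
          · have h3 := hdlt w (by omega)
            rw [if_neg (by omega : m ≠ w)] at h3
            rw [hcy]
            have h4 := haE w hw h
            omega
          · have h3 := hdlt w hβα
            rw [if_pos hmβ] at h3
            rw [hcy]
            omega
          · exact habove w h
      · refine ⟨β, ?_, fun w hw => habove w hw⟩
        have h3 := hdlt β hβα
        rw [if_neg (by omega : m ≠ β)] at h3
        rw [hcy]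
        omega

end MsetPaper
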